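/- arXiv:1510.04242 — 3 statements merged into one kernel-verified Lean document; each statement's English description precedes it below -/
import Mathlib

section
/- If φ is a unit flow on a finite bipartite graph (E,B,W,b,w), then there exists a perfect matching M ⊆ E contained in the support of φ, i.e. φ(e) > 0 for every e ∈ M. -/
/-- A perfect matching in a finite bipartite graph `(E,B,W,b,w)` (multiple edges allowed):
a subset `M` of the edges such that every black node is the black endpoint of exactly one
edge of `M`, and every white node is the white endpoint of exactly one edge of `M`. -/
def IsPerfectMatching {E B W : Type*} [Fintype E] [DecidableEq B] [DecidableEq W]
    (b : E → B) (w : E → W) (M : Finset E) : Prop :=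
  (∀ v : B, (M.filter fun e => b e = v).card = 1) ∧
  (∀ u : W, (M.filter fun e => w e = u).card = 1)

/-- If `φ` is a unit flow on a finite bipartite graph, then there is a perfect matching
contained in the support of `φ`. -/
theorem exists_perfectMatching_subset_support_of_unitFlow
    {E B W : Type*} [Fintype E] [DecidableEq E] [DecidableEq B] [DecidableEq W]
    (b : E → B) (w : E → W) (φ : E → ℝ)
    (hφ : ∀ e, 0 ≤ φ e)
    (hB : ∀ v : B, ∑ e ∈ Finset.univ.filter (fun e => b e = v), φ e = 1)
    (hW : ∀ u : W, ∑ e ∈ Finset.univ.filter (fun e => w e = u), φ e = 1) :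
    ∃ M : Finset E, IsPerfectMatching b w M ∧ ∀ e ∈ M, 0 < φ e := by
  classical
  -- B and W are finite since every node carries positive flow, hence an edge
  have hbsurj : Function.Surjective b := by
    intro v
    by_contra h
    push_neg at h
    have h0 : ∑ e ∈ Finset.univ.filter (fun e => b e = v), φ e = 0 := by
      apply Finset.sum_eq_zero
      intro e he
      exact absurd (Finset.mem_filter.mp he).2 (h e)
    rw [hB v] at h0
    exact one_ne_zero h0
  have hwsurj : Function.Surjective w := by
    intro u
    by_contra h
    push_neg at h
    have h0 : ∑ e ∈ Finset.univ.filter (fun e => w e = u), φ e = 0 := by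
      apply Finset.sum_eq_zero
      intro e he
      exact absurd (Finset.mem_filter.mp he).2 (h e)
    rw [hW u] at h0
    exact one_ne_zero h0
  haveI : Fintype B := Fintype.ofSurjective b hbsurj
  haveI : Fintype W := Fintype.ofSurjective w hwsurj
  -- the neighborhood sets of the support graph
  set t : B → Finset W :=
    fun v => (Finset.univ.filter fun e => b e = v ∧ 0 < φ e).image w with ht
  -- Hall's condition
  have hall : ∀ s : Finset B, s.card ≤ (s.biUnion t).card := by
    intro s
    have key : (s.card : ℝ) ≤ ((s.biUnion t).card : ℝ) := by
      have h1 : (s.card : ℝ) = ∑ e ∈ Finset.univ.filter (fun e => b e ∈ s), φ e := by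
        rw [← Finset.sum_fiberwise_eq_sum_filter Finset.univ s b φ]
        simp [hB]
      have h2 : ((s.biUnion t).card : ℝ)
          = ∑ e ∈ Finset.univ.filter (fun e => w e ∈ s.biUnion t), φ e := by
        rw [← Finset.sum_fiberwise_eq_sum_filter Finset.univ (s.biUnion t) w φ]
        simp [hW]
      rw [h1, h2]
      have h3 : ∑ e ∈ Finset.univ.filter (fun e => b e ∈ s), φ e
          = ∑ e ∈ Finset.univ.filter (fun e => b e ∈ s ∧ 0 < φ e), φ e := by
        rw [Finset.filter_and]
        apply (Finset.sum_filter_of_ne _).symm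
        intro e _ hne
        simp only [Finset.mem_filter, Finset.mem_univ, true_and, Finset.mem_val]
        exact lt_of_le_of_ne (hφ e) (Ne.symm hne)
      rw [h3]
      apply Finset.sum_le_sum_of_subset_of_nonneg
      · intro e he
        simp only [Finset.mem_filter, Finset.mem_univ, true_and] at he ⊢
        rw [Finset.mem_biUnion]
        exact ⟨b e, he.1, Finset.mem_image.mpr ⟨e, Finset.mem_filter.mpr
          ⟨Finset.mem_univ e, rfl, he.2⟩, rfl⟩⟩
      · intro e _ _
        exact hφ e
    exact_mod_cast key
  obtain ⟨f, finj, hf⟩ := (Finset.all_card_le_biUnion_card_iff_exists_injective t).mp hall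
  -- |B| = |W| since the total flow counts both
  have hcard : Fintype.card B = Fintype.card W := by
    have hBc : (Fintype.card B : ℝ) = ∑ e : E, φ e := by
      have := Finset.sum_fiberwise_eq_sum_filter Finset.univ
        (Finset.univ : Finset B) b φ
      simp only [Finset.mem_univ, Finset.filter_true] at this
      rw [← this, Finset.sum_congr rfl (fun v _ => hB v), Finset.sum_const,
        Finset.card_univ, nsmul_eq_mul, mul_one]
    have hWc : (Fintype.card W : ℝ) = ∑ e : E, φ e := by
      have := Finset.sum_fiberwise_eq_sum_filter Finset.univ
        (Finset.univ : Finset W) w φ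
      simp only [Finset.mem_univ, Finset.filter_true] at this
      rw [← this, Finset.sum_congr rfl (fun u _ => hW u), Finset.sum_const,
        Finset.card_univ, nsmul_eq_mul, mul_one]
    exact_mod_cast hBc.trans hWc.symm
  have fbij : Function.Bijective f :=
    (Fintype.bijective_iff_injective_and_card f).mpr ⟨finj, hcard⟩
  -- pick, for each black node, an edge realizing the matching
  have hg : ∀ v : B, ∃ e : E, b e = v ∧ 0 < φ e ∧ w e = f v := by
    intro v
    have := hf v
    rw [ht] at this
    simp only [Finset.mem_image, Finset.mem_filter, Finset.mem_univ, true_and] at this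
    obtain ⟨e, ⟨h1, h2⟩, h3⟩ := this
    exact ⟨e, h1, h2, h3⟩
  choose g hgb hgφ hgw using hg
  refine ⟨Finset.univ.image g, ⟨?_, ?_⟩, ?_⟩
  · intro v
    have : (Finset.univ.image g).filter (fun e => b e = v) = {g v} := by
      ext e
      simp only [Finset.mem_filter, Finset.mem_image, Finset.mem_univ, true_and,
        Finset.mem_singleton]
      constructor
      · rintro ⟨⟨v', rfl⟩, h2⟩
        rw [hgb v'] at h2
        rw [h2]
      · rintro rfl
        exact ⟨⟨v, rfl⟩, hgb v⟩
    rw [this, Finset.card_singleton]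
  · intro u
    obtain ⟨v, rfl⟩ := fbij.surjective u
    have : (Finset.univ.image g).filter (fun e => w e = f v) = {g v} := by
      ext e
      simp only [Finset.mem_filter, Finset.mem_image, Finset.mem_univ, true_and,
        Finset.mem_singleton]
      constructor
      · rintro ⟨⟨v', rfl⟩, h2⟩
        rw [hgw v'] at h2
        rw [finj h2]
      · rintro rfl
        exact ⟨⟨v, rfl⟩, hgw v⟩
    rw [this, Finset.card_singleton]
  · intro e he
    obtain ⟨v, _, rfl⟩ := Finset.mem_image.mp he
    exact hgφ v
end

section
/- The cone of nonnegative edge weightings with all node sums equal is generated by the perfect matchings: let (E,B,W,b,w) be a finite bipartite graph and let σ be the set of all n : E → ℝ such that n(e) ≥ 0 for every e ∈ E and all the node sums Σ_{e : b(e)=v} n(e) (for v ∈ B) and Σ_{e : w(e)=u} n(e) (for u ∈ W) are equal to one common value. Then σ equals the set of all finite nonnegative linear combinations Σ_P λ_P·1_P (λ_P ≥ 0) of indicator functions of perfect matchings P of the graph. -/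
section Aux
open Finset

variable {E B W : Type*} [Fintype E] [DecidableEq E] [DecidableEq B] [DecidableEq W]

lemma fiber_sum (b : E → B) (n : E → ℝ) (S : Finset B) :
    ∑ e ∈ univ.filter (fun e => b e ∈ S), n e
      = ∑ v ∈ S, ∑ e ∈ univ.filter (fun e => b e = v), n e := by
  rw [← Finset.sum_fiberwise_of_maps_to (g := b) (t := S) (fun e he => (mem_filter.mp he).2)]
  refine Finset.sum_congr rfl fun v hv => Finset.sum_congr ?_ fun _ _ => rfl
  ext e
  simp only [mem_filter, mem_univ, true_and, and_iff_right_iff_imp]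
  rintro rfl
  exact hv

set_option linter.unusedSectionVars false

lemma exists_matching (b : E → B) (w : E → W) (n : E → ℝ) (hn : ∀ e, 0 ≤ n e)
    (s : ℝ) (hs : 0 < s)
    (hb : ∀ v : B, ∑ e ∈ univ.filter (fun e => b e = v), n e = s)
    (hw : ∀ u : W, ∑ e ∈ univ.filter (fun e => w e = u), n e = s) :
    ∃ M : Finset E, IsPerfectMatching b w M ∧ ∀ e ∈ M, 0 < n e := by
  classical
  -- every black node has a positive edge
  have hposb : ∀ v : B, ∃ e, b e = v ∧ 0 < n e := by
    intro v
    by_contra h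
    push_neg at h
    have : ∑ e ∈ univ.filter (fun e => b e = v), n e = 0 := by
      refine Finset.sum_eq_zero fun e he => ?_
      have := h e (mem_filter.mp he).2
      exact le_antisymm (by linarith [this]) (hn e)
    rw [hb v] at this; linarith
  have hposw : ∀ u : W, ∃ e, w e = u ∧ 0 < n e := by
    intro u
    by_contra h
    push_neg at h
    have : ∑ e ∈ univ.filter (fun e => w e = u), n e = 0 := by
      refine Finset.sum_eq_zero fun e he => ?_
      have := h e (mem_filter.mp he).2
      exact le_antisymm (by linarith [this]) (hn e)
    rw [hw u] at this; linarith
  have hbsurj : Function.Surjective b := fun v => ⟨(hposb v).choose, (hposb v).choose_spec.1⟩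
  have hwsurj : Function.Surjective w := fun u => ⟨(hposw u).choose, (hposw u).choose_spec.1⟩
  haveI : Fintype B := Fintype.ofSurjective b hbsurj
  haveI : Fintype W := Fintype.ofSurjective w hwsurj
  -- Hall condition for t
  set t : B → Finset W := fun v => (univ.filter (fun e => b e = v ∧ 0 < n e)).image w with ht
  have hall : ∀ S : Finset B, S.card ≤ (S.biUnion t).card := by
    intro S
    have key : (S.card : ℝ) * s ≤ ((S.biUnion t).card : ℝ) * s := by
      have h1 : ∑ e ∈ univ.filter (fun e => b e ∈ S), n e = S.card * s := by
        rw [fiber_sum]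
        simp [hb, mul_comm]
      have h2 : ∑ e ∈ univ.filter (fun e => w e ∈ S.biUnion t), n e
          = (S.biUnion t).card * s := by
        rw [fiber_sum w n (S.biUnion t)]
        simp [hw, mul_comm]
      rw [← h1, ← h2]
      have h3 : ∑ e ∈ univ.filter (fun e => b e ∈ S), n e
          = ∑ e ∈ univ.filter (fun e => b e ∈ S ∧ 0 < n e), n e := by
        rw [Finset.sum_filter, Finset.sum_filter]
        refine Finset.sum_congr rfl fun e _ => ?_
        rcases lt_or_eq_of_le (hn e) with h | h
        · simp [h]
        · simp [← h]
      rw [h3]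
      refine Finset.sum_le_sum_of_subset_of_nonneg ?_ (fun e _ _ => hn e)
      intro e he
      simp only [mem_filter, mem_univ, true_and] at he ⊢
      refine Finset.mem_biUnion.mpr ⟨b e, he.1, ?_⟩
      rw [ht]
      exact Finset.mem_image.mpr ⟨e, mem_filter.mpr ⟨mem_univ e, rfl, he.2⟩, rfl⟩
    have := le_of_mul_le_mul_right key hs
    exact_mod_cast this
  obtain ⟨f, hfinj, hf⟩ := (Finset.all_card_le_biUnion_card_iff_exists_injective t).mp hall
  -- cardinalities agree
  have hcard : Fintype.card B = Fintype.card W := by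
    have h1 : ∑ e, n e = (Fintype.card B : ℝ) * s := by
      calc ∑ e, n e = ∑ e ∈ univ.filter (fun e => b e ∈ (univ : Finset B)), n e := by simp
        _ = ∑ v ∈ (univ : Finset B), ∑ e ∈ univ.filter (fun e => b e = v), n e :=
            fiber_sum b n univ
        _ = (Fintype.card B : ℝ) * s := by
            rw [Finset.sum_congr rfl fun v _ => hb v, Finset.sum_const, nsmul_eq_mul]
            rfl
    have h2 : ∑ e, n e = (Fintype.card W : ℝ) * s := by
      calc ∑ e, n e = ∑ e ∈ univ.filter (fun e => w e ∈ (univ : Finset W)), n e := by simp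
        _ = ∑ u ∈ (univ : Finset W), ∑ e ∈ univ.filter (fun e => w e = u), n e :=
            fiber_sum w n univ
        _ = (Fintype.card W : ℝ) * s := by
            rw [Finset.sum_congr rfl fun u _ => hw u, Finset.sum_const, nsmul_eq_mul]
            rfl
    have := h1.symm.trans h2
    exact_mod_cast mul_right_cancel₀ (ne_of_gt hs) this
  have hfbij : Function.Bijective f :=
    ⟨hfinj, by
      have := Fintype.bijective_iff_injective_and_card f
      exact ((this.mpr ⟨hfinj, hcard⟩)).2⟩
  -- choose an edge for each black node
  have hedge : ∀ v : B, ∃ e, b e = v ∧ w e = f v ∧ 0 < n e := by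
    intro v
    have := hf v
    rw [ht] at this
    obtain ⟨e, he, hwe⟩ := Finset.mem_image.mp this
    simp only [mem_filter, mem_univ, true_and] at he
    exact ⟨e, he.1, hwe, he.2⟩
  choose m hm1 hm2 hm3 using hedge
  have hminj : Function.Injective m := fun v v' h => by
    rw [← hm1 v, ← hm1 v', h]
  refine ⟨univ.image m, ⟨?_, ?_⟩, ?_⟩
  · intro v
    rw [Finset.card_eq_one]
    refine ⟨m v, ?_⟩
    ext e
    simp only [mem_filter, Finset.mem_image, mem_univ, true_and, Finset.mem_singleton]
    constructor
    · rintro ⟨⟨v', rfl⟩, h2⟩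
      rw [hm1 v'] at h2; rw [h2]
    · rintro rfl
      exact ⟨⟨v, rfl⟩, hm1 v⟩
  · intro u
    obtain ⟨v, rfl⟩ := hfbij.2 u
    rw [Finset.card_eq_one]
    refine ⟨m v, ?_⟩
    ext e
    simp only [mem_filter, Finset.mem_image, mem_univ, true_and, Finset.mem_singleton]
    constructor
    · rintro ⟨⟨v', rfl⟩, h2⟩
      rw [hm2 v'] at h2
      rw [hfinj h2]
    · rintro rfl
      exact ⟨⟨v, rfl⟩, hm2 v⟩
  · intro e he
    obtain ⟨v, _, rfl⟩ := Finset.mem_image.mp he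
    exact hm3 v

lemma decompose (b : E → B) (w : E → W) : ∀ k : ℕ, ∀ n : E → ℝ,
    (Finset.univ.filter fun e => n e ≠ 0).card ≤ k →
    (∀ e, 0 ≤ n e) →
    ∀ s : ℝ, (∀ v : B, ∑ e ∈ univ.filter (fun e => b e = v), n e = s) →
    (∀ u : W, ∑ e ∈ univ.filter (fun e => w e = u), n e = s) →
    ∃ (r : ℕ) (P : Fin r → Finset E) (lam : Fin r → ℝ),
      (∀ i, 0 ≤ lam i) ∧ (∀ i, IsPerfectMatching b w (P i)) ∧
      ∀ e : E, n e = ∑ i, if e ∈ P i then lam i else 0 := by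
  classical
  intro k
  induction k with
  | zero =>
    intro n hcard hn s hb hw
    refine ⟨0, Fin.elim0, Fin.elim0, fun i => i.elim0, fun i => i.elim0, fun e => ?_⟩
    have : (Finset.univ.filter fun e => n e ≠ 0) = ∅ := Finset.card_eq_zero.mp (le_antisymm hcard (Nat.zero_le _))
    have he : e ∉ (Finset.univ.filter fun e => n e ≠ 0) := this ▸ Finset.notMem_empty e
    simp only [mem_filter, mem_univ, true_and, not_not] at he
    simp [he]
  | succ k ih =>
    intro n hcard hn s hb hw
    by_cases hz : ∀ e, n e = 0
    · refine ⟨0, Fin.elim0, Fin.elim0, fun i => i.elim0, fun i => i.elim0, fun e => by simp [hz]⟩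
    push_neg at hz
    obtain ⟨e₀, he₀⟩ := hz
    have he₀pos : 0 < n e₀ := lt_of_le_of_ne (hn e₀) (Ne.symm he₀)
    have hs : 0 < s := by
      have := hb (b e₀)
      have hle : n e₀ ≤ ∑ e ∈ univ.filter (fun e => b e = b e₀), n e :=
        Finset.single_le_sum (fun e _ => hn e) (by simp)
      linarith
    obtain ⟨M, hM, hMpos⟩ := exists_matching b w n hn s hs hb hw
    -- M is nonempty
    have hMne : M.Nonempty := by
      have := hM.1 (b e₀)
      have : (M.filter fun e => b e = b e₀).Nonempty := Finset.card_pos.mp (by rw [this]; norm_num)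
      obtain ⟨e, he⟩ := this
      exact ⟨e, (mem_filter.mp he).1⟩
    obtain ⟨e₁, he₁M, he₁min⟩ := Finset.exists_min_image M n hMne
    set lam0 := n e₁ with hlam0
    have hlam0pos : 0 < lam0 := hMpos e₁ he₁M
    set n' : E → ℝ := fun e => n e - if e ∈ M then lam0 else 0 with hn'
    have hn'nonneg : ∀ e, 0 ≤ n' e := by
      intro e
      simp only [hn']
      by_cases h : e ∈ M
      · simp only [h, if_true]; linarith [he₁min e h]
      · simp [h, hn e]
    -- node sums for n'
    have hsum : ∀ (F : Finset E), (M.filter fun e => e ∈ F).card = 1 →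
        ∑ e ∈ F, n' e = (∑ e ∈ F, n e) - lam0 := by
      intro F hF
      simp only [hn', Finset.sum_sub_distrib]
      congr 1
      rw [Finset.sum_ite_mem]
      rw [show F ∩ M = M.filter fun e => e ∈ F by
        ext e; simp [Finset.mem_inter, and_comm]]
      rw [Finset.sum_const, hF, one_smul]
    have hb' : ∀ v : B, ∑ e ∈ univ.filter (fun e => b e = v), n' e = s - lam0 := by
      intro v
      rw [hsum _ (by
        rw [show (M.filter fun e => e ∈ univ.filter (fun e => b e = v)) = M.filter fun e => b e = v by
          ext e; simp]
        exact hM.1 v), hb v]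
    have hw' : ∀ u : W, ∑ e ∈ univ.filter (fun e => w e = u), n' e = s - lam0 := by
      intro u
      rw [hsum _ (by
        rw [show (M.filter fun e => e ∈ univ.filter (fun e => w e = u)) = M.filter fun e => w e = u by
          ext e; simp]
        exact hM.2 u), hw u]
    -- support strictly decreases
    have hsub : (Finset.univ.filter fun e => n' e ≠ 0) ⊂ (Finset.univ.filter fun e => n e ≠ 0) := by
      constructor
      · intro e he
        simp only [mem_filter, mem_univ, true_and, hn'] at he ⊢
        by_cases h : e ∈ M
        · exact ne_of_gt (hMpos e h)
        · simpa [h] using he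
      · intro hsubset
        have h1 : e₁ ∈ (Finset.univ.filter fun e => n e ≠ 0) := by
          simp only [mem_filter, mem_univ, true_and]
          exact ne_of_gt hlam0pos
        have h2 : e₁ ∉ (Finset.univ.filter fun e => n' e ≠ 0) := by
          simp [hn', he₁M, hlam0]
        exact h2 (hsubset h1)
    have hcard' : (Finset.univ.filter fun e => n' e ≠ 0).card ≤ k := by
      have := Finset.card_lt_card hsub
      omega
    obtain ⟨r, P, lam, hlamnn, hPM, hrep⟩ := ih n' hcard' hn'nonneg (s - lam0) hb' hw'
    refine ⟨r + 1, Fin.cons M P, Fin.cons lam0 lam, ?_, ?_, ?_⟩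
    · intro i
      refine Fin.cases ?_ ?_ i
      · simpa using le_of_lt hlam0pos
      · intro j; simpa using hlamnn j
    · intro i
      refine Fin.cases ?_ ?_ i
      · simpa using hM
      · intro j; simpa using hPM j
    · intro e
      rw [Fin.sum_univ_succ]
      simp only [Fin.cons_zero, Fin.cons_succ]
      have := hrep e
      simp only [hn'] at this
      by_cases h : e ∈ M <;> simp [h] at this ⊢ <;> linarith

end Aux

/-- The cone of nonnegative edge weightings with all node sums equal to one common value is
exactly the set of finite nonnegative linear combinations of indicator functions of perfect
matchings. -/
theorem cone_eq_nonneg_combinations_of_perfectMatchings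
    {E B W : Type*} [Fintype E] [DecidableEq E] [DecidableEq B] [DecidableEq W]
    (b : E → B) (w : E → W) :
    {n : E → ℝ | (∀ e, 0 ≤ n e) ∧ ∃ s : ℝ,
        (∀ v : B, ∑ e ∈ Finset.univ.filter (fun e => b e = v), n e = s) ∧
        (∀ u : W, ∑ e ∈ Finset.univ.filter (fun e => w e = u), n e = s)} =
    {n : E → ℝ | ∃ (r : ℕ) (P : Fin r → Finset E) (lam : Fin r → ℝ),
        (∀ i, 0 ≤ lam i) ∧ (∀ i, IsPerfectMatching b w (P i)) ∧
        ∀ e : E, n e = ∑ i, if e ∈ P i then lam i else 0} := by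
  ext n
  simp only [Set.mem_setOf_eq]
  constructor
  · rintro ⟨hn, s, hb, hw⟩
    exact decompose b w _ n le_rfl hn s hb hw
  · rintro ⟨r, P, lam, hlam, hPM, hrep⟩
    constructor
    · intro e
      rw [hrep e]
      exact Finset.sum_nonneg fun i _ => by by_cases h : e ∈ P i <;> simp [h, hlam i]
    · refine ⟨∑ i, lam i, ?_, ?_⟩
      · intro v
        calc ∑ e ∈ Finset.univ.filter (fun e => b e = v), n e
            = ∑ e ∈ Finset.univ.filter (fun e => b e = v), ∑ i, if e ∈ P i then lam i else 0 :=
              Finset.sum_congr rfl fun e _ => hrep e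
          _ = ∑ i, ∑ e ∈ Finset.univ.filter (fun e => b e = v), (if e ∈ P i then lam i else 0) :=
              Finset.sum_comm
          _ = ∑ i, lam i := by
              refine Finset.sum_congr rfl fun i _ => ?_
              rw [Finset.sum_ite_mem]
              rw [show Finset.univ.filter (fun e => b e = v) ∩ P i
                    = (P i).filter fun e => b e = v by
                ext e; simp [Finset.mem_inter, and_comm]]
              rw [Finset.sum_const, (hPM i).1 v, one_smul]
      · intro u
        calc ∑ e ∈ Finset.univ.filter (fun e => w e = u), n e
            = ∑ e ∈ Finset.univ.filter (fun e => w e = u), ∑ i, if e ∈ P i then lam i else 0 :=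
              Finset.sum_congr rfl fun e _ => hrep e
          _ = ∑ i, ∑ e ∈ Finset.univ.filter (fun e => w e = u), (if e ∈ P i then lam i else 0) :=
              Finset.sum_comm
          _ = ∑ i, lam i := by
              refine Finset.sum_congr rfl fun i _ => ?_
              rw [Finset.sum_ite_mem]
              rw [show Finset.univ.filter (fun e => w e = u) ∩ P i
                    = (P i).filter fun e => w e = u by
                ext e; simp [Finset.mem_inter, and_comm]]
              rw [Finset.sum_const, (hPM i).2 u, one_smul]
end

section
/- Determinant expansion over perfect matchings (the expansion underlying Kasteleyn's theorem): let (E,B,W,b,w) be a finite bipartite graph with |B| = |W| = n, fix enumerations β : Fin n ≃ B and ω : Fin n ≃ W, and let l : E → ℂ be edge weights. Define the n×n matrix K by K(i,j) = Σ_{e : b(e)=β(i) and w(e)=ω(j)} l(e). Then det K = Σ_M sgn(π_M) · Π_{e∈M} l(e), where the sum runs over all perfect matchings M of the graph, and π_M ∈ S_n is the permutation defined by π_M(i) = j if and only if the unique edge e ∈ M with b(e) = β(i) satisfies w(e) = ω(j). -/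
open scoped Classical

/-- The determinant of the weighted biadjacency (Kasteleyn) matrix expands as a signed sum
over the perfect matchings of the bipartite graph, the sign of a matching `M` being the
sign of the permutation `π M` that it induces between the black and the white nodes. -/
theorem det_biadjacency_eq_signed_sum_over_perfectMatchings
    {E B W : Type*} [Fintype E] [DecidableEq E] [DecidableEq B] [DecidableEq W]
    {n : ℕ} (b : E → B) (w : E → W) (β : Fin n ≃ B) (ω : Fin n ≃ W)
    (l : E → ℂ) (π : Finset E → Equiv.Perm (Fin n))
    (hπ : ∀ M : Finset E, IsPerfectMatching b w M →
      ∀ i j : Fin n, π M i = j ↔ ∃ e ∈ M, b e = β i ∧ w e = ω j) :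
    Matrix.det (Matrix.of fun i j : Fin n =>
        ∑ e ∈ Finset.univ.filter (fun e => b e = β i ∧ w e = ω j), l e) =
      ∑ M ∈ Finset.univ.filter (fun M : Finset E => IsPerfectMatching b w M),
        ((Equiv.Perm.sign (π M) : ℤ) : ℂ) * ∏ e ∈ M, l e := by
  classical
  letI : Fintype B := Fintype.ofEquiv _ β
  have hcardB : Fintype.card B = n := by
    rw [← Fintype.card_fin n]; exact (Fintype.card_congr β.symm)
  -- the set of edges from black node i to white node j
  set S : Fin n → Fin n → Finset E :=
    fun i j => Finset.univ.filter (fun e => b e = β i ∧ w e = ω j) with hS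
  -- cardinality of a perfect matching is n
  have hMcard : ∀ M : Finset E, IsPerfectMatching b w M → M.card = n := by
    intro M hM
    rw [Finset.card_eq_sum_card_fiberwise (fun e _ => Finset.mem_univ (b e))]
    simp [hM.1, hcardB]
  -- uniqueness of the edge at a black node
  have huniq : ∀ M : Finset E, IsPerfectMatching b w M →
      ∀ e₁ ∈ M, ∀ e₂ ∈ M, b e₁ = b e₂ → e₁ = e₂ := by
    intro M hM e₁ h₁ e₂ h₂ hb
    have hc := hM.1 (b e₂)
    exact Finset.card_le_one.1 (le_of_eq hc) e₁
      (Finset.mem_filter.2 ⟨h₁, hb⟩) e₂ (Finset.mem_filter.2 ⟨h₂, rfl⟩)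
  rw [← Matrix.det_transpose, Matrix.det_apply']
  simp only [Matrix.transpose_apply, Matrix.of_apply]
  have hstep : ∀ σ : Equiv.Perm (Fin n),
      (((Equiv.Perm.sign σ : ℤ) : ℂ) * ∏ i : Fin n, ∑ e ∈ S i (σ i), l e) =
        ∑ f ∈ Fintype.piFinset (fun i => S i (σ i)),
          ((Equiv.Perm.sign σ : ℤ) : ℂ) * ∏ i : Fin n, l (f i) := by
    intro σ
    rw [Finset.prod_univ_sum, Finset.mul_sum]
  rw [Finset.sum_congr rfl (fun σ _ => hstep σ),
    Finset.sum_sigma' Finset.univ (fun σ => Fintype.piFinset (fun i => S i (σ i)))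
      (fun σ f => ((Equiv.Perm.sign σ : ℤ) : ℂ) * ∏ i : Fin n, l (f i))]
  -- basic facts about members of the sigma set
  have hmem : ∀ p : Σ _ : Equiv.Perm (Fin n), Fin n → E,
      p ∈ Finset.univ.sigma (fun σ => Fintype.piFinset (fun i => S i (σ i))) →
      (∀ i, b (p.2 i) = β i) ∧ (∀ i, w (p.2 i) = ω (p.1 i)) := by
    intro p hp
    have := (Finset.mem_sigma.1 hp).2
    rw [Fintype.mem_piFinset] at this
    constructor
    · intro i; exact ((Finset.mem_filter.1 (this i)).2).1
    · intro i; exact ((Finset.mem_filter.1 (this i)).2).2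
  have hinj : ∀ p : Σ _ : Equiv.Perm (Fin n), Fin n → E,
      (∀ i, b (p.2 i) = β i) → Function.Injective p.2 := by
    intro p hb i j hij
    have : β i = β j := by rw [← hb i, ← hb j, hij]
    exact β.injective this
  -- forward: a pair (σ, f) gives the matching image f univ, which is perfect
  have hFwd : ∀ p : Σ _ : Equiv.Perm (Fin n), Fin n → E,
      p ∈ Finset.univ.sigma (fun σ => Fintype.piFinset (fun i => S i (σ i))) →
      IsPerfectMatching b w (Finset.image p.2 Finset.univ) := by
    intro p hp
    obtain ⟨hb, hw⟩ := hmem p hp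
    constructor
    · intro v
      rw [Finset.card_eq_one]
      refine ⟨p.2 (β.symm v), ?_⟩
      ext e
      simp only [Finset.mem_filter, Finset.mem_image, Finset.mem_univ, true_and,
        Finset.mem_singleton]
      constructor
      · rintro ⟨⟨i, rfl⟩, hv⟩
        have : β i = v := by rw [← hb i]; exact hv
        rw [← this, Equiv.symm_apply_apply]
      · rintro rfl
        exact ⟨⟨β.symm v, rfl⟩, by rw [hb, Equiv.apply_symm_apply]⟩
    · intro u
      rw [Finset.card_eq_one]
      refine ⟨p.2 (p.1.symm (ω.symm u)), ?_⟩
      ext e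
      simp only [Finset.mem_filter, Finset.mem_image, Finset.mem_univ, true_and,
        Finset.mem_singleton]
      constructor
      · rintro ⟨⟨i, rfl⟩, hu⟩
        have : p.1 i = ω.symm u := by
          apply ω.injective; rw [← hw i, Equiv.apply_symm_apply]; exact hu
        rw [← this, Equiv.symm_apply_apply]
      · rintro rfl
        exact ⟨⟨p.1.symm (ω.symm u), rfl⟩, by
          rw [hw, Equiv.apply_symm_apply, Equiv.apply_symm_apply]⟩
  -- the permutation of the image matching is σ
  have hπeq : ∀ p : Σ _ : Equiv.Perm (Fin n), Fin n → E,
      (hp : p ∈ Finset.univ.sigma (fun σ => Fintype.piFinset (fun i => S i (σ i)))) →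
      π (Finset.image p.2 Finset.univ) = p.1 := by
    intro p hp
    obtain ⟨hb, hw⟩ := hmem p hp
    refine Equiv.ext fun i => ?_
    exact (hπ _ (hFwd p hp) i (p.1 i)).2
      ⟨p.2 i, Finset.mem_image_of_mem _ (Finset.mem_univ i), hb i, hw i⟩
  -- existence of the chosen edge in a matching
  have hex : ∀ M : Finset E, IsPerfectMatching b w M → ∀ i : Fin n,
      ∃ e, e ∈ M ∧ b e = β i ∧ w e = ω (π M i) := by
    intro M hM i
    obtain ⟨e, he, h1, h2⟩ := (hπ M hM i (π M i)).1 rfl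
    exact ⟨e, he, h1, h2⟩
  refine Finset.sum_bij'
    (fun p _ => Finset.image p.2 Finset.univ)
    (fun M hM => ⟨π M, fun i =>
      (hex M ((Finset.mem_filter.1 hM).2) i).choose⟩)
    (fun p hp => Finset.mem_filter.2 ⟨Finset.mem_univ _, hFwd p hp⟩)
    ?_ ?_ ?_ ?_
  · -- backward map lands in the sigma set
    intro M hM
    have hM' := (Finset.mem_filter.1 hM).2
    refine Finset.mem_sigma.2 ⟨Finset.mem_univ _, Fintype.mem_piFinset.2 fun i => ?_⟩
    obtain ⟨he, h1, h2⟩ := (hex M hM' i).choose_spec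
    exact Finset.mem_filter.2 ⟨Finset.mem_univ _, h1, h2⟩
  · -- left inverse
    intro p hp
    obtain ⟨hb', hw'⟩ := hmem p hp
    set M := Finset.image p.2 Finset.univ with hMdef
    have hM' : IsPerfectMatching b w M := hFwd p hp
    have h1 : π M = p.1 := hπeq p hp
    have h2 : (fun i => (hex M hM' i).choose) = p.2 := by
      funext i
      obtain ⟨he, hb2, hw2⟩ := (hex M hM' i).choose_spec
      exact huniq M hM' _ he (p.2 i)
        (Finset.mem_image_of_mem _ (Finset.mem_univ i)) (by rw [hb2, hb' i])
    exact Sigma.ext h1 (heq_of_eq h2)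
  · -- right inverse
    intro M hM
    have hM' := (Finset.mem_filter.1 hM).2
    have hsub : Finset.image (fun i => (hex M hM' i).choose) Finset.univ ⊆ M := by
      intro e he
      obtain ⟨i, _, rfl⟩ := Finset.mem_image.1 he
      exact (hex M hM' i).choose_spec.1
    have hinj' : Function.Injective (fun i => (hex M hM' i).choose) := by
      intro i j hij
      have hij' : (hex M hM' i).choose = (hex M hM' j).choose := hij
      apply β.injective
      rw [← (hex M hM' i).choose_spec.2.1, ← (hex M hM' j).choose_spec.2.1, hij']
    have hcard : (Finset.image (fun i => (hex M hM' i).choose) Finset.univ).card = n := by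
      rw [Finset.card_image_of_injective _ hinj', Finset.card_univ, Fintype.card_fin]
    exact Finset.eq_of_subset_of_card_le hsub (by rw [hcard, hMcard M hM'])
  · -- values agree
    intro p hp
    obtain ⟨hb', hw'⟩ := hmem p hp
    rw [hπeq p hp, Finset.prod_image (fun i _ j _ h => hinj p hb' h)]
end
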